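/- Let 1 < p < 2 and let b: (0,∞)×ℝⁿ → ℂ be supported in the tent over a ball B_i = B(c_i, r_i), i.e. supp b ⊆ {(t,y): B(y,√t) ⊆ B_i}. Then (∫₀^∞ |⨍_{B_i} b(t,y) dy|² dt)^{1/2} ≲ |B_i|^{−1/p} ‖b‖_{T^p}, with implicit constant depending only on n and p. -/

import Mathlib

open MeasureTheory Set ENNReal
open Function Metric

/-- The conical (tent space) square function norm `‖g‖_{T^p}`. -/
noncomputable def Tnorm (n : ℕ) (p : ℝ)
    (g : ℝ → EuclideanSpace ℝ (Fin n) → ℝ≥0∞) : ℝ≥0∞ :=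
  (∫⁻ x, (∫⁻ t in Ioi (0 : ℝ),
      (volume (Metric.ball x (Real.sqrt t)))⁻¹ *
        ∫⁻ y in Metric.ball x (Real.sqrt t), (g t y) ^ 2) ^ (p / 2)) ^ (1 / p)

private lemma ennreal_holder_two {α : Type*} [MeasurableSpace α] (μ : Measure α)
    (f g : α → ℝ≥0∞) (hf : AEMeasurable f μ) (hg : AEMeasurable g μ) :
    ∫⁻ a, f a * g a ∂μ ≤
      (∫⁻ a, f a ^ (2:ℝ) ∂μ) ^ ((1:ℝ)/2) * (∫⁻ a, g a ^ (2:ℝ) ∂μ) ^ ((1:ℝ)/2) := by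
  have h22 : (2:ℝ).HolderConjugate 2 := Real.holderConjugate_iff.mpr ⟨one_lt_two, by norm_num⟩
  simpa using ENNReal.lintegral_mul_le_Lp_mul_Lq μ h22 hf hg

private lemma ennreal_cs {α : Type*} [MeasurableSpace α] (μ : Measure α)
    (f : α → ℝ≥0∞) (hf : AEMeasurable f μ) :
    ∫⁻ a, f a ∂μ ≤ (∫⁻ a, f a ^ (2:ℝ) ∂μ) ^ ((1:ℝ)/2) * (μ univ) ^ ((1:ℝ)/2) := by
  have := ennreal_holder_two μ f (fun _ => 1) hf aemeasurable_const
  simpa using this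

private lemma stepA (n : ℕ) (c : EuclideanSpace ℝ (Fin n)) (r : ℝ) (hr : 0 < r)
    (b : ℝ → EuclideanSpace ℝ (Fin n) → ℂ) (hb : Measurable (Function.uncurry b))
    (hsupp : ∀ t y, b t y ≠ 0 → 0 < t ∧ Metric.ball y (Real.sqrt t) ⊆ Metric.ball c r)
    {t : ℝ} (ht : 0 < t) :
    (‖⨍ y in Metric.ball c r, b t y‖₊ : ℝ≥0∞)
      ≤ (volume (Metric.ball c r))⁻¹ *
        ∫⁻ x in Metric.ball c r,
          ((volume (Metric.ball x (Real.sqrt t)))⁻¹ *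
            ∫⁻ y in Metric.ball x (Real.sqrt t), (‖b t y‖₊ : ℝ≥0∞) ^ 2) ^ ((1:ℝ)/2) := by
  set B := Metric.ball c r with hBdef
  have hBmeas : MeasurableSet B := measurableSet_ball
  have hvB0 : volume B ≠ 0 := (measure_ball_pos volume c hr).ne'
  have hvBtop : volume B ≠ ⊤ := measure_ball_lt_top.ne
  set s := Real.sqrt t with hs_def
  have hs : 0 < s := Real.sqrt_pos.2 ht
  set v : ℝ≥0∞ := volume (Metric.ball (0 : EuclideanSpace ℝ (Fin n)) s) with hv_def
  have hv0 : v ≠ 0 := (measure_ball_pos volume _ hs).ne'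
  have hvtop : v ≠ ⊤ := measure_ball_lt_top.ne
  have hball : ∀ x : EuclideanSpace ℝ (Fin n), volume (Metric.ball x s) = v := fun x =>
    Measure.addHaar_ball_center volume x s
  have hbty : Measurable fun y => b t y := hb.of_uncurry_left
  have hbe : Measurable fun y : EuclideanSpace ℝ (Fin n) => (‖b t y‖₊ : ℝ≥0∞) := hbty.nnnorm.coe_nnreal_ennreal
  -- step a1 : average to integral
  have a1 : (‖⨍ y in B, b t y‖₊ : ℝ≥0∞) = (volume B)⁻¹ * (‖∫ y in B, b t y‖₊ : ℝ≥0∞) := by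
    rw [setAverage_eq, measureReal_def, nnnorm_smul, ENNReal.coe_mul, ← enorm_eq_nnnorm,
      Real.enorm_eq_ofReal (by positivity),
      ENNReal.ofReal_inv_of_pos (ENNReal.toReal_pos hvB0 hvBtop),
      ENNReal.ofReal_toReal hvBtop]
  -- step a2 : norm of integral ≤ lintegral of norms over all space
  have a2 : (‖∫ y in B, b t y‖₊ : ℝ≥0∞) ≤ ∫⁻ y, (‖b t y‖₊ : ℝ≥0∞) := by
    refine (enorm_integral_le_lintegral_enorm _).trans ?_
    exact setLIntegral_le_lintegral _ _
  -- the kernel for Fubini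
  set k : EuclideanSpace ℝ (Fin n) → EuclideanSpace ℝ (Fin n) → ℝ≥0∞ :=
    fun y x => if dist x y < s then (‖b t y‖₊ : ℝ≥0∞) else 0 with hk_def
  have hkm : Measurable (Function.uncurry k) := by
    apply Measurable.ite
    · exact measurableSet_lt (continuous_snd.dist continuous_fst).measurable measurable_const
    · exact hbe.comp measurable_fst
    · exact measurable_const
  set φ : EuclideanSpace ℝ (Fin n) → ℝ≥0∞ :=
    fun x => ∫⁻ y in Metric.ball x s, (‖b t y‖₊ : ℝ≥0∞) with hphi_def
  have hk_int : ∀ x, ∫⁻ y, k y x = φ x := by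
    intro x
    show _ = ∫⁻ y in Metric.ball x s, (‖b t y‖₊ : ℝ≥0∞)
    rw [← lintegral_indicator measurableSet_ball]
    congr 1
    funext y
    rw [Set.indicator]
    simp only [hk_def, Metric.mem_ball]
    rw [dist_comm]
  -- step a3 : Fubini
  have a3 : ∫⁻ y, (‖b t y‖₊ : ℝ≥0∞) = v⁻¹ * ∫⁻ x, φ x := by
    have hy_eq : ∀ y, (‖b t y‖₊ : ℝ≥0∞) = v⁻¹ * ∫⁻ x, k y x := by
      intro y
      have h2 : ∫⁻ x, k y x = (‖b t y‖₊ : ℝ≥0∞) * v := by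
        have : ∫⁻ x, k y x = ∫⁻ x in Metric.ball y s, ((‖b t y‖₊ : ℝ≥0∞)) := by
          rw [← lintegral_indicator measurableSet_ball]
          refine lintegral_congr fun x => ?_
          rw [Set.indicator]
          simp only [hk_def, Metric.mem_ball]
        rw [this, setLIntegral_const, hball]
      rw [h2, mul_comm ((‖b t y‖₊ : ℝ≥0∞)) v, ← mul_assoc,
        ENNReal.inv_mul_cancel hv0 hvtop, one_mul]
    calc ∫⁻ y, (‖b t y‖₊ : ℝ≥0∞) = ∫⁻ y, v⁻¹ * ∫⁻ x, k y x := by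
          exact lintegral_congr hy_eq
      _ = v⁻¹ * ∫⁻ y, ∫⁻ x, k y x := lintegral_const_mul' _ _ (ENNReal.inv_ne_top.2 hv0)
      _ = v⁻¹ * ∫⁻ x, ∫⁻ y, k y x := by rw [lintegral_lintegral_swap hkm.aemeasurable]
      _ = v⁻¹ * ∫⁻ x, φ x := by simp_rw [hk_int]
  -- step a4 : support of φ is inside B
  have hφ0 : ∀ x, x ∉ B → φ x = 0 := by
    intro x hx
    have hz : ∀ y ∈ Metric.ball x s, (fun y => (‖b t y‖₊ : ℝ≥0∞)) y = (fun _ => (0:ℝ≥0∞)) y := by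
      intro y hy
      simp only
      by_contra h
      have hby : b t y ≠ 0 := by simpa using h
      refine hx ((hsupp t y hby).2 ?_)
      rw [Metric.mem_ball, dist_comm]
      exact Metric.mem_ball.1 hy
    rw [hphi_def]
    simp only
    rw [setLIntegral_congr_fun measurableSet_ball (fun y hy => hz y hy)]
    simp
  have a4 : ∫⁻ x, φ x = ∫⁻ x in B, φ x := by
    rw [← lintegral_indicator hBmeas]
    refine lintegral_congr fun x => ?_
    by_cases hx : x ∈ B
    · rw [Set.indicator_of_mem hx]
    · rw [Set.indicator_of_notMem hx, hφ0 x hx]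
  -- step a5 : Cauchy--Schwarz on each small ball
  have a5 : ∀ x : EuclideanSpace ℝ (Fin n), v⁻¹ * φ x ≤
      ((volume (Metric.ball x s))⁻¹ *
        ∫⁻ y in Metric.ball x s, (‖b t y‖₊ : ℝ≥0∞) ^ 2) ^ ((1:ℝ)/2) := by
    intro x
    set I : ℝ≥0∞ := ∫⁻ y in Metric.ball x s, (‖b t y‖₊ : ℝ≥0∞) ^ 2 with hI_def
    have hcs : φ x ≤ I ^ ((1:ℝ)/2) * v ^ ((1:ℝ)/2) := by
      have := ennreal_cs (volume.restrict (Metric.ball x s)) _ hbe.aemeasurable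
      rw [Measure.restrict_apply_univ, hball] at this
      refine le_trans ?_ (le_trans this ?_)
      · exact le_of_eq rfl
      · gcongr
        rw [hI_def]
        refine le_of_eq (lintegral_congr fun y => ?_)
        rw [show ((2:ℝ)) = ((2:ℕ):ℝ) by norm_num, ENNReal.rpow_natCast]
    have hco : v⁻¹ * (I ^ ((1:ℝ)/2) * v ^ ((1:ℝ)/2)) = (v⁻¹ * I) ^ ((1:ℝ)/2) := by
      have hv1 : v⁻¹ = (v⁻¹) ^ ((1:ℝ)/2) * (v⁻¹) ^ ((1:ℝ)/2) := by
        rw [← ENNReal.rpow_add _ _ (ENNReal.inv_ne_zero.2 hvtop) (ENNReal.inv_ne_top.2 hv0)]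
        norm_num
      have hv2 : (v⁻¹) ^ ((1:ℝ)/2) * v ^ ((1:ℝ)/2) = 1 := by
        rw [← ENNReal.mul_rpow_of_nonneg _ _ (by norm_num : (0:ℝ) ≤ 1/2),
          ENNReal.inv_mul_cancel hv0 hvtop, ENNReal.one_rpow]
      calc v⁻¹ * (I ^ ((1:ℝ)/2) * v ^ ((1:ℝ)/2))
          = ((v⁻¹) ^ ((1:ℝ)/2) * I ^ ((1:ℝ)/2)) * ((v⁻¹) ^ ((1:ℝ)/2) * v ^ ((1:ℝ)/2)) := by
            conv_lhs => rw [hv1]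
            exact mul_mul_mul_comm _ _ _ _
        _ = (v⁻¹) ^ ((1:ℝ)/2) * I ^ ((1:ℝ)/2) := by rw [hv2, mul_one]
        _ = (v⁻¹ * I) ^ ((1:ℝ)/2) := by
            rw [ENNReal.mul_rpow_of_nonneg _ _ (by norm_num : (0:ℝ) ≤ 1/2)]
    calc v⁻¹ * φ x ≤ v⁻¹ * (I ^ ((1:ℝ)/2) * v ^ ((1:ℝ)/2)) := by gcongr
      _ = (v⁻¹ * I) ^ ((1:ℝ)/2) := hco
      _ = ((volume (Metric.ball x s))⁻¹ * I) ^ ((1:ℝ)/2) := by rw [hball]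
  -- combine
  calc (‖⨍ y in B, b t y‖₊ : ℝ≥0∞)
      = (volume B)⁻¹ * (‖∫ y in B, b t y‖₊ : ℝ≥0∞) := a1
    _ ≤ (volume B)⁻¹ * (v⁻¹ * ∫⁻ x in B, φ x) := by
        rw [← a4, ← a3]; gcongr
    _ = (volume B)⁻¹ * ∫⁻ x in B, v⁻¹ * φ x := by
        rw [lintegral_const_mul' _ _ (ENNReal.inv_ne_top.2 hv0)]
    _ ≤ (volume B)⁻¹ *
        ∫⁻ x in B, ((volume (Metric.ball x s))⁻¹ *
            ∫⁻ y in Metric.ball x s, (‖b t y‖₊ : ℝ≥0∞) ^ 2) ^ ((1:ℝ)/2) := by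
        exact mul_le_mul_right (setLIntegral_mono' hBmeas fun x _ => a5 x) _

private lemma minkowski_two {α β : Type*} [MeasurableSpace α] [MeasurableSpace β]
    (μ : Measure α) (ν : Measure β) [SFinite μ] [SFinite ν]
    (F : α → β → ℝ≥0∞) (hF : Measurable (Function.uncurry F)) :
    (∫⁻ t, (∫⁻ x, F t x ^ ((1:ℝ)/2) ∂ν) ^ (2:ℝ) ∂μ) ^ ((1:ℝ)/2)
      ≤ ∫⁻ x, (∫⁻ t, F t x ∂μ) ^ ((1:ℝ)/2) ∂ν := by
  set f : α → β → ℝ≥0∞ := fun t x => F t x ^ ((1:ℝ)/2) with hf_def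
  have hfm : Measurable (Function.uncurry f) := hF.pow_const _
  have hfm2 : ∀ t, Measurable (f t) := fun t => hfm.comp (measurable_prodMk_left)
  have hsq : ∀ z : ℝ≥0∞, z ^ (2:ℝ) = z * z := fun z => by
    rw [show (2:ℝ) = ((2:ℕ):ℝ) by norm_num, ENNReal.rpow_natCast, pow_two]
  have hfF : ∀ t x, f t x ^ (2:ℝ) = F t x := fun t x => by
    rw [hf_def, ← ENNReal.rpow_mul]; norm_num
  have key : ∀ t, (∫⁻ x, f t x ∂ν) ^ (2:ℝ) = ∫⁻ q : β × β, f t q.1 * f t q.2 ∂(ν.prod ν) := by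
    intro t
    rw [lintegral_prod_mul ((hfm2 t).aemeasurable) ((hfm2 t).aemeasurable), hsq]
  set g : β → ℝ≥0∞ := fun x => (∫⁻ t, F t x ∂μ) ^ ((1:ℝ)/2) with hg_def
  have hgm : Measurable g := by
    have : Measurable fun x => ∫⁻ t, F t x ∂μ :=
      Measurable.lintegral_prod_right (hF.comp measurable_swap)
    exact this.pow_const _
  have expand : ∫⁻ t, (∫⁻ x, f t x ∂ν) ^ (2:ℝ) ∂μ
      = ∫⁻ q : β × β, ∫⁻ t, f t q.1 * f t q.2 ∂μ ∂(ν.prod ν) := by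
    simp_rw [key]
    exact lintegral_lintegral_swap
      (((hfm.comp (measurable_fst.prodMk measurable_snd.fst)).mul
        (hfm.comp (measurable_fst.prodMk measurable_snd.snd))).aemeasurable)
  have inner_le : ∀ q : β × β, ∫⁻ t, f t q.1 * f t q.2 ∂μ ≤ g q.1 * g q.2 := by
    intro q
    have h1 : AEMeasurable (fun t => f t q.1) μ :=
      (hfm.comp (measurable_id.prodMk measurable_const)).aemeasurable
    have h2 : AEMeasurable (fun t => f t q.2) μ :=
      (hfm.comp (measurable_id.prodMk measurable_const)).aemeasurable
    refine (ennreal_holder_two μ _ _ h1 h2).trans_eq ?_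
    rw [hg_def]
    simp only [hfF]
  have step : ∫⁻ t, (∫⁻ x, f t x ∂ν) ^ (2:ℝ) ∂μ ≤ (∫⁻ x, g x ∂ν) ^ (2:ℝ) := by
    rw [expand, hsq, ← lintegral_prod_mul hgm.aemeasurable hgm.aemeasurable]
    exact lintegral_mono inner_le
  have := ENNReal.rpow_le_rpow step (by norm_num : (0:ℝ) ≤ 1/2)
  rwa [← ENNReal.rpow_mul, show (2:ℝ) * (1/2) = 1 by norm_num, ENNReal.rpow_one] at this



set_option maxHeartbeats 1000000 in
/-- let `1 < p < 2` and let `b` be supported in the tent over a ball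
`B_i = B(c_i, r_i)`, i.e. `b(t,y) ≠ 0` implies `t > 0` and `B(y,√t) ⊆ B_i`. Then
`(∫₀^∞ |⨍_{B_i} b(t,y) dy|² dt)^{1/2} ≤ C |B_i|^{−1/p} ‖b‖_{T^p}`
with `C` depending only on `n` and `p`. -/
theorem stmt12 (n : ℕ) (p : ℝ) (hp : 1 < p) (hp2 : p < 2) :
    ∃ C : ℝ≥0∞, 0 < C ∧ C < ⊤ ∧
      ∀ (c : EuclideanSpace ℝ (Fin n)) (r : ℝ), 0 < r →
        ∀ b : ℝ → EuclideanSpace ℝ (Fin n) → ℂ,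
          Measurable (Function.uncurry b) →
          (∀ t y, b t y ≠ 0 → 0 < t ∧ Metric.ball y (Real.sqrt t) ⊆ Metric.ball c r) →
          (∫⁻ t in Ioi (0 : ℝ),
              (‖⨍ y in Metric.ball c r, b t y‖₊ : ℝ≥0∞) ^ 2) ^ ((1 : ℝ) / 2)
            ≤ C * volume (Metric.ball c r) ^ (-(1 / p)) *
                Tnorm n p (fun t y => (‖b t y‖₊ : ℝ≥0∞)) := by
  have hp0 : p ≠ 0 := by positivity
  refine ⟨1, zero_lt_one, ENNReal.one_lt_top, ?_⟩
  intro c r hr b hb hsupp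
  set B := Metric.ball c r with hBdef
  have hBmeas : MeasurableSet B := measurableSet_ball
  have hvB0 : volume B ≠ 0 := (measure_ball_pos volume c hr).ne'
  have hvBtop : volume B ≠ ⊤ := measure_ball_lt_top.ne
  obtain ⟨G, hG_def⟩ : ∃ G' : ℝ → EuclideanSpace ℝ (Fin n) → ℝ≥0∞, G' = fun t x =>
      (volume (Metric.ball x (Real.sqrt t)))⁻¹ *
        ∫⁻ y in Metric.ball x (Real.sqrt t), (‖b t y‖₊ : ℝ≥0∞) ^ 2 := ⟨_, rfl⟩
  -- joint measurability of G
  have hGm : Measurable (Function.uncurry G) := by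
    simp only [hG_def, Function.uncurry]
    have h1 : Measurable fun q : ℝ × EuclideanSpace ℝ (Fin n) =>
        (volume (Metric.ball q.2 (Real.sqrt q.1)))⁻¹ := by
      have he : (fun q : ℝ × EuclideanSpace ℝ (Fin n) =>
          (volume (Metric.ball q.2 (Real.sqrt q.1)))⁻¹)
          = fun q => (volume (Metric.ball (0 : EuclideanSpace ℝ (Fin n)) (Real.sqrt q.1)))⁻¹ :=
        funext fun q => by rw [Measure.addHaar_ball_center]
      have hmono : Monotone fun t : ℝ =>
          volume (Metric.ball (0 : EuclideanSpace ℝ (Fin n)) (Real.sqrt t)) := fun t₁ t₂ h =>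
        measure_mono (Metric.ball_subset_ball (Real.sqrt_le_sqrt h))
      rw [he]
      exact (hmono.measurable.comp measurable_fst).inv
    have hKm : Measurable fun q : (ℝ × EuclideanSpace ℝ (Fin n)) × EuclideanSpace ℝ (Fin n) =>
        (if dist q.2 q.1.2 < Real.sqrt q.1.1 then (‖b q.1.1 q.2‖₊ : ℝ≥0∞) ^ 2 else 0) := by
      have hcont1 : Continuous fun q :
          (ℝ × EuclideanSpace ℝ (Fin n)) × EuclideanSpace ℝ (Fin n) => dist q.2 q.1.2 :=
        continuous_snd.dist continuous_fst.snd
      have hcont2 : Continuous fun q :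
          (ℝ × EuclideanSpace ℝ (Fin n)) × EuclideanSpace ℝ (Fin n) => Real.sqrt q.1.1 :=
        Real.continuous_sqrt.comp continuous_fst.fst
      have hset : MeasurableSet {q : (ℝ × EuclideanSpace ℝ (Fin n)) × EuclideanSpace ℝ (Fin n) |
          dist q.2 q.1.2 < Real.sqrt q.1.1} :=
        measurableSet_lt hcont1.measurable hcont2.measurable
      have hval : Measurable fun q :
          (ℝ × EuclideanSpace ℝ (Fin n)) × EuclideanSpace ℝ (Fin n) =>
          (‖b q.1.1 q.2‖₊ : ℝ≥0∞) ^ 2 :=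
        ((hb.comp (measurable_fst.fst.prodMk measurable_snd)).nnnorm.coe_nnreal_ennreal).pow_const 2
      exact Measurable.ite hset hval measurable_const
    have h2 : Measurable fun q : ℝ × EuclideanSpace ℝ (Fin n) =>
        ∫⁻ y in Metric.ball q.2 (Real.sqrt q.1), (‖b q.1 y‖₊ : ℝ≥0∞) ^ 2 := by
      have he : (fun q : ℝ × EuclideanSpace ℝ (Fin n) =>
          ∫⁻ y in Metric.ball q.2 (Real.sqrt q.1), (‖b q.1 y‖₊ : ℝ≥0∞) ^ 2)
          = fun q => ∫⁻ y,
              (if dist y q.2 < Real.sqrt q.1 then (‖b q.1 y‖₊ : ℝ≥0∞) ^ 2 else 0) := by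
        funext q
        rw [← lintegral_indicator measurableSet_ball]
        refine lintegral_congr fun y => ?_
        rw [Set.indicator]
        simp only [Metric.mem_ball]
      rw [he]
      exact Measurable.lintegral_prod_right hKm
    exact h1.mul h2
  have hIm : Measurable fun x => ∫⁻ t in Ioi (0:ℝ), G t x := by
    apply Measurable.lintegral_prod_right (f := fun x t => G t x)
    exact hGm.comp measurable_swap
  set A : EuclideanSpace ℝ (Fin n) → ℝ≥0∞ :=
    fun x => (∫⁻ t in Ioi (0:ℝ), G t x) ^ ((1:ℝ)/2) with hA_def
  have hAm : Measurable A := hIm.pow_const _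
  set T : ℝ≥0∞ := Tnorm n p (fun t y => (‖b t y‖₊ : ℝ≥0∞)) with hT_def
  -- step 1 : per-t bound and monotonicity
  have step1 : (∫⁻ t in Ioi (0 : ℝ), (‖⨍ y in B, b t y‖₊ : ℝ≥0∞) ^ 2) ^ ((1 : ℝ) / 2)
      ≤ (∫⁻ t in Ioi (0:ℝ),
          ((volume B)⁻¹ * ∫⁻ x in B, (G t x) ^ ((1:ℝ)/2)) ^ 2) ^ ((1:ℝ)/2) := by
    refine ENNReal.rpow_le_rpow ?_ (by norm_num)
    refine setLIntegral_mono' measurableSet_Ioi fun t ht => ?_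
    simp only [hG_def]
    exact pow_le_pow_left₀ (by positivity) (stepA n c r hr b hb hsupp ht) 2
  -- pull out the constant
  have step2 : (∫⁻ t in Ioi (0:ℝ),
        ((volume B)⁻¹ * ∫⁻ x in B, (G t x) ^ ((1:ℝ)/2)) ^ 2) ^ ((1:ℝ)/2)
      = (volume B)⁻¹ * (∫⁻ t in Ioi (0:ℝ),
          (∫⁻ x in B, (G t x) ^ ((1:ℝ)/2)) ^ (2:ℝ)) ^ ((1:ℝ)/2) := by
    have hsq : ∀ z : ℝ≥0∞, z ^ (2:ℕ) = z ^ (2:ℝ) := fun z => by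
      rw [← ENNReal.rpow_natCast z 2]
      norm_num
    simp_rw [mul_pow]
    rw [lintegral_const_mul' _ _ (by
      exact ENNReal.pow_ne_top (ENNReal.inv_ne_top.2 hvB0)),
      ENNReal.mul_rpow_of_nonneg _ _ (by norm_num : (0:ℝ) ≤ 1/2)]
    congr 1
    · rw [hsq, ← ENNReal.rpow_mul]
      norm_num
    · congr 1
      exact lintegral_congr fun t => hsq _
  -- Minkowski
  have step3 : (∫⁻ t in Ioi (0:ℝ),
        (∫⁻ x in B, (G t x) ^ ((1:ℝ)/2)) ^ (2:ℝ)) ^ ((1:ℝ)/2) ≤ ∫⁻ x in B, A x :=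
    minkowski_two (volume.restrict (Ioi (0:ℝ))) (volume.restrict B) G hGm
  -- Hölder / Jensen on B
  set q' : ℝ := p / (p - 1) with hq'_def
  have hp1 : p - 1 ≠ 0 := by intro h; nlinarith
  have hpq : p.HolderConjugate q' := by
    rw [Real.holderConjugate_iff]; constructor
    · exact hp
    · rw [hq'_def]; field_simp; ring
  have step4 : ∫⁻ x in B, A x ≤ (∫⁻ x in B, A x ^ p) ^ (1/p) * (volume B) ^ (1/q') := by
    have := ENNReal.lintegral_mul_le_Lp_mul_Lq (volume.restrict B) hpq
      hAm.aemeasurable (aemeasurable_const (b := (1:ℝ≥0∞)))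
    simp only [Pi.mul_apply, mul_one, ENNReal.one_rpow, lintegral_const, one_mul,
      Measure.restrict_apply_univ] at this
    exact this
  -- the Lp integral is bounded by the tent norm
  have step5 : (∫⁻ x in B, A x ^ p) ^ (1/p) ≤ T := by
    have h1 : ∀ x, A x ^ p = (∫⁻ t in Ioi (0:ℝ), G t x) ^ (p/2) := by
      intro x
      simp only [hA_def]
      rw [← ENNReal.rpow_mul]
      congr 1
      ring
    have h2 : ∫⁻ x in B, A x ^ p ≤ ∫⁻ x, (∫⁻ t in Ioi (0:ℝ), G t x) ^ (p/2) := by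
      simp_rw [h1]
      exact setLIntegral_le_lintegral _ _
    refine (ENNReal.rpow_le_rpow h2 (by positivity)).trans ?_
    rw [hT_def, Tnorm]
    simp only [hG_def]
    exact le_rfl
  -- final algebra
  have halg : (volume B)⁻¹ * ((volume B) ^ (1/q') * T) = 1 * volume B ^ (-(1/p)) * T := by
    rw [one_mul, ← mul_assoc]
    congr 1
    rw [← ENNReal.rpow_neg_one (volume B), ← ENNReal.rpow_add _ _ hvB0 hvBtop]
    congr 1
    rw [hq'_def]
    field_simp
    ring
  calc (∫⁻ t in Ioi (0 : ℝ), (‖⨍ y in B, b t y‖₊ : ℝ≥0∞) ^ 2) ^ ((1 : ℝ) / 2)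
      ≤ (∫⁻ t in Ioi (0:ℝ),
          ((volume B)⁻¹ * ∫⁻ x in B, (G t x) ^ ((1:ℝ)/2)) ^ 2) ^ ((1:ℝ)/2) := step1
    _ = (volume B)⁻¹ * (∫⁻ t in Ioi (0:ℝ),
          (∫⁻ x in B, (G t x) ^ ((1:ℝ)/2)) ^ (2:ℝ)) ^ ((1:ℝ)/2) := step2
    _ ≤ (volume B)⁻¹ * ∫⁻ x in B, A x := by gcongr
    _ ≤ (volume B)⁻¹ * ((∫⁻ x in B, A x ^ p) ^ (1/p) * (volume B) ^ (1/q')) := by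
        exact mul_le_mul_right step4 _
    _ ≤ (volume B)⁻¹ * ((volume B) ^ (1/q') * T) := by
        rw [mul_comm ((∫⁻ x in B, A x ^ p) ^ (1/p)) _]
        exact mul_le_mul_right (mul_le_mul_right step5 _) _
    _ = 1 * volume B ^ (-(1/p)) * T := halg
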